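/- Let f be a bounded holomorphic function on the open unit disk 𝔻 such that the kernel K(λ, z) = (1 − conj(f(λ))·f(z))² / (1 − conj(λ)·z)² is positive semi-definite on 𝔻. If there exists a point λ₀ ∈ 𝔻 with |f(λ₀)| = 1, then f is a constant (unimodular) function on 𝔻. -/

import Mathlib

open Complex Metric ComplexOrder

/-- A kernel `K` on the open unit disk is positive semi-definite if for every finite
family of points in the disk and complex coefficients, the associated quadratic form
is a nonnegative real number (using the partial order on `ℂ`). -/
def IsPSDKernelOnDisk (K : ℂ → ℂ → ℂ) : Prop :=
  ∀ (n : ℕ) (lam : Fin n → ℂ), (∀ i, ‖lam i‖ < 1) →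
    ∀ c : Fin n → ℂ,
      0 ≤ ∑ i, ∑ j, (starRingEnd ℂ) (c i) * c j * K (lam i) (lam j)

/-- If `t ↦ t•P + D` is nonnegative (in the complex order) for all real `t`, then `P = 0`. -/
lemma aux_lin_zero (P D : ℂ) (h : ∀ t : ℝ, 0 ≤ (t : ℂ) * P + D) : P = 0 := by
  have key : ∀ t : ℝ, 0 ≤ t * P.re + D.re ∧ t * P.im + D.im = 0 := by
    intro t
    have h2 := h t
    rw [Complex.le_def] at h2
    constructor
    · simpa [Complex.add_re, Complex.mul_re] using h2.1
    · have h3 := h2.2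
      simp [Complex.add_im, Complex.mul_im] at h3
      linarith
  have him0 : D.im = 0 := by simpa using (key 0).2
  have himP : P.im = 0 := by have h4 := (key 1).2; rw [him0] at h4; linarith
  have hreP : P.re = 0 := by
    by_contra hne
    have h1 := (key (-(D.re + 1) / P.re)).1
    rw [div_mul_cancel₀ _ hne] at h1
    linarith
  exact Complex.ext hreP himP

/-- If the kernel `(1 - conj (f λ) * f z)² / (1 - conj λ * z)²` is positive
semi-definite and `|f(λ₀)| = 1` at some point of the disk, then `f` is a
unimodular constant on the disk. -/
theorem const_of_psd_of_unimodular_value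
    (f : ℂ → ℂ) (hf : DifferentiableOn ℂ f (ball (0 : ℂ) 1))
    (hb : ∃ M : ℝ, ∀ z ∈ ball (0 : ℂ) 1, ‖f z‖ ≤ M)
    (hpsd : IsPSDKernelOnDisk (fun lam z =>
        (1 - (starRingEnd ℂ) (f lam) * f z) ^ 2 / (1 - (starRingEnd ℂ) lam * z) ^ 2))
    (h1 : ∃ lam₀ ∈ ball (0 : ℂ) 1, ‖f lam₀‖ = 1) :
    ∃ c : ℂ, ‖c‖ = 1 ∧ ∀ z ∈ ball (0 : ℂ) 1, f z = c := by
  obtain ⟨l₀, hl₀, habs⟩ := h1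
  have hl₀' : ‖l₀‖ < 1 := by simpa [Complex.dist_eq] using hl₀
  have hcc : (starRingEnd ℂ) (f l₀) * f l₀ = 1 := by
    rw [mul_comm, Complex.mul_conj, Complex.normSq_eq_norm_sq, habs]
    norm_num
  refine ⟨f l₀, habs, fun z hz => ?_⟩
  have hz' : ‖z‖ < 1 := by simpa [Complex.dist_eq] using hz
  set A : ℂ := (1 - (starRingEnd ℂ) (f l₀) * f z) ^ 2 / (1 - (starRingEnd ℂ) l₀ * z) ^ 2 with hA
  set B : ℂ := (1 - (starRingEnd ℂ) (f z) * f l₀) ^ 2 / (1 - (starRingEnd ℂ) z * l₀) ^ 2 with hB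
  set D : ℂ := (1 - (starRingEnd ℂ) (f z) * f z) ^ 2 / (1 - (starRingEnd ℂ) z * z) ^ 2 with hD
  have hlam2 : ∀ i : Fin 2, ‖![l₀, z] i‖ < 1 := by
    intro i; fin_cases i
    · simpa using hl₀'
    · simpa using hz'
  have hdiag : (1 - (starRingEnd ℂ) (f l₀) * f l₀) ^ 2 / (1 - (starRingEnd ℂ) l₀ * l₀) ^ 2 = 0 := by
    rw [hcc]; simp
  have key1 : ∀ t : ℝ, 0 ≤ (t : ℂ) * (A + B) + D := by
    intro t
    have h5 := hpsd 2 ![l₀, z] hlam2 ![(t : ℂ), 1]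
    simp only [Fin.sum_univ_two, Matrix.cons_val_zero, Matrix.cons_val_one, Matrix.head_cons,
      Complex.conj_ofReal, map_one, one_mul, mul_one, hdiag, ← hA, ← hB, ← hD, mul_zero] at h5
    have heq : (t : ℂ) * A + ((t : ℂ) * B + D) = (t : ℂ) * (A + B) + D := by ring
    rwa [zero_add, heq] at h5
  have key2 : ∀ t : ℝ, 0 ≤ (t : ℂ) * (Complex.I * (B - A)) + D := by
    intro t
    have h5 := hpsd 2 ![l₀, z] hlam2 ![(t : ℂ) * Complex.I, 1]
    simp only [Fin.sum_univ_two, Matrix.cons_val_zero, Matrix.cons_val_one, Matrix.head_cons,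
      map_mul, Complex.conj_ofReal, Complex.conj_I, map_one, one_mul, mul_one, hdiag, mul_zero,
      ← hA, ← hB, ← hD] at h5
    have heq : (t : ℂ) * -Complex.I * A + ((t : ℂ) * Complex.I * B + D)
        = (t : ℂ) * (Complex.I * (B - A)) + D := by ring
    rwa [zero_add, heq] at h5
  have hPB : A + B = 0 := aux_lin_zero _ _ key1
  have hQB : Complex.I * (B - A) = 0 := aux_lin_zero _ _ key2
  have hBA : B = A := by
    have := mul_eq_zero.mp hQB
    rcases this with h | h
    · exact absurd h Complex.I_ne_zero
    · linear_combination h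
  have hA0 : A = 0 := by
    have : A + A = 0 := by rw [← hBA] at hPB ⊢; linear_combination hPB
    linear_combination this / 2
  have hden : (1 - (starRingEnd ℂ) l₀ * z) ≠ 0 := by
    intro h
    have h1 : (starRingEnd ℂ) l₀ * z = 1 := by linear_combination -h
    have : ‖(starRingEnd ℂ) l₀ * z‖ = 1 := by rw [h1]; simp
    rw [norm_mul, Complex.norm_conj] at this
    nlinarith [norm_nonneg l₀, norm_nonneg z]
  have hnum : (1 - (starRingEnd ℂ) (f l₀) * f z) ^ 2 = 0 := by
    rw [hA, div_eq_zero_iff] at hA0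
    rcases hA0 with h | h
    · exact h
    · exact absurd h (pow_ne_zero 2 hden)
  have h6 : (starRingEnd ℂ) (f l₀) * f z = 1 := by
    have := pow_eq_zero_iff (n := 2) (by norm_num) |>.mp hnum
    linear_combination -this
  calc f z = ((starRingEnd ℂ) (f l₀) * f l₀) * f z := by rw [hcc]; ring
    _ = f l₀ * ((starRingEnd ℂ) (f l₀) * f z) := by ring
    _ = f l₀ := by rw [h6]; ring
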